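/- Let E be a bounded subset of ℝ^N (N ≥ 2, or more generally a finite-dimensional real normed space of dimension ≥ 2) such that E is connected and its complement ℝ^N \ E is connected. Then the topological boundary (frontier) of E is connected. -/

import Mathlib

open Set Metric Complex Finset

lemma aux_lattice {a b : ℂ} (ha : Complex.exp a = 1) (hb : Complex.exp b = 1)
    (hne : a ≠ b) : 2 ≤ dist a b := by
  obtain ⟨n, rfl⟩ := Complex.exp_eq_one_iff.1 ha
  obtain ⟨m, rfl⟩ := Complex.exp_eq_one_iff.1 hb
  have hnm : n ≠ m := by rintro rfl; exact hne rfl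
  have h1 : (1:ℝ) ≤ |((n - m : ℤ) : ℝ)| := by exact_mod_cast Int.one_le_abs (sub_ne_zero.2 hnm)
  have h2 : dist ((n:ℂ) * (2 * ↑Real.pi * I)) ((m:ℂ) * (2 * ↑Real.pi * I))
      = |((n - m : ℤ) : ℝ)| * (2 * Real.pi) := by
    rw [Complex.dist_eq]
    have e : (n:ℂ) * (2 * ↑Real.pi * I) - (m:ℂ) * (2 * ↑Real.pi * I)
        = (((n - m : ℤ) : ℝ) : ℂ) * (2 * ↑Real.pi * I) := by push_cast; ring
    rw [e, norm_mul, norm_mul, norm_mul, Complex.norm_real, Complex.norm_I, Complex.norm_real,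
      Complex.norm_two, Real.norm_eq_abs, Real.norm_eq_abs, abs_of_pos Real.pi_pos, mul_one]
  rw [h2]
  nlinarith [Real.pi_gt_three]

lemma aux_const {X : Type*} [TopologicalSpace X] {h : X → ℂ} {Ω S : Set X}
    (hΩ : IsOpen Ω) (hc : ContinuousOn h Ω) (hSΩ : S ⊆ Ω) (hS : IsPreconnected S)
    (hv : ∀ x ∈ S, Complex.exp (h x) = 1) :
    ∀ x ∈ S, ∀ y ∈ S, h x = h y := by
  intro x hx y hy
  set U : Set X := Ω ∩ h ⁻¹' Metric.ball (h x) 1 with hUdef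
  set V : Set X := Ω ∩ h ⁻¹' (Metric.closedBall (h x) 1)ᶜ with hVdef
  have hU : IsOpen U := hc.isOpen_inter_preimage hΩ Metric.isOpen_ball
  have hV : IsOpen V := hc.isOpen_inter_preimage hΩ Metric.isClosed_closedBall.isOpen_compl
  have hmem : ∀ z ∈ S, z ∈ U ∪ V := by
    intro z hz
    rcases eq_or_ne (h z) (h x) with he | hne
    · exact Or.inl ⟨hSΩ hz, by simp [he]⟩
    · refine Or.inr ⟨hSΩ hz, ?_⟩
      have := aux_lattice (hv z hz) (hv x hx) hne
      simp only [Set.mem_preimage, Set.mem_compl_iff, Metric.mem_closedBall, not_le]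
      linarith
  by_cases hyV : y ∈ V
  · exfalso
    have hne : (S ∩ (U ∩ V)).Nonempty :=
      hS U V hU hV hmem ⟨x, hx, hSΩ hx, by simp⟩ ⟨y, hy, hyV⟩
    obtain ⟨z, _, hzU, hzV⟩ := hne
    have h1 : dist (h z) (h x) < 1 := hzU.2
    have h2 : ¬ dist (h z) (h x) ≤ 1 := by simpa using hzV.2
    exact h2 h1.le
  · have hyU : y ∈ U := (hmem y hy).resolve_right hyV
    have hd : dist (h y) (h x) < 1 := hyU.2
    by_contra hne
    have := aux_lattice (hv x hx) (hv y hy) hne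
    rw [dist_comm] at this
    linarith

lemma aux_log {X : Type*} [NormedAddCommGroup X] [NormedSpace ℝ X] [ProperSpace X]
    {f : X → ℂ} (hf : Continuous f) (habs : ∀ x, ‖f x‖ = 1)
    (R : ℝ) (hR : 0 ≤ R) :
    ∃ g : X → ℂ, ContinuousOn g (Metric.ball 0 (R + 1)) ∧
      ∀ x ∈ Metric.ball (0 : X) (R + 1), Complex.exp (g x) = f x := by
  have hne : ∀ y, f y ≠ 0 := by
    intro y hy
    have := habs y
    rw [hy] at this; simp at this
  -- uniform continuity on a compact ball
  have hK : IsCompact (Metric.closedBall (0 : X) (R + 1)) := isCompact_closedBall _ _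
  have huc := hK.uniformContinuousOn_of_continuous hf.continuousOn
  rw [Metric.uniformContinuousOn_iff] at huc
  obtain ⟨δ, hδ, hδ'⟩ := huc 1 one_pos
  obtain ⟨n0, hn0⟩ := exists_nat_gt ((R + 1) / δ)
  set n : ℕ := max n0 1 with hn_def
  have hn1 : 1 ≤ n := le_max_right _ _
  have hnpos : (0:ℝ) < n := by exact_mod_cast lt_of_lt_of_le one_pos (by exact_mod_cast hn1)
  have hnδ : (R + 1) / n < δ := by
    have : (R + 1) / δ < n := lt_of_lt_of_le hn0 (by exact_mod_cast le_max_left n0 1)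
    rw [div_lt_iff₀ hnpos]
    rw [div_lt_iff₀ hδ] at this
    linarith
  -- key: points along segment
  have hpt : ∀ (x : X), x ∈ Metric.ball (0:X) (R+1) → ∀ (t : ℝ), 0 ≤ t → t ≤ 1 →
      t • x ∈ Metric.closedBall (0:X) (R+1) := by
    intro x hx t ht0 ht1
    rw [Metric.mem_closedBall, dist_zero_right, norm_smul, Real.norm_eq_abs]
    rw [Metric.mem_ball, dist_zero_right] at hx
    have h : |t| ≤ 1 := by rw [_root_.abs_of_nonneg ht0]; exact ht1
    nlinarith [norm_nonneg x, abs_nonneg t]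
  -- ratio function
  set q : ℕ → X → ℂ := fun k x => f ((((k:ℝ)+1)/n) • x) / f (((k:ℝ)/n) • x) with hq_def
  have hq_cont : ∀ k, Continuous (q k) := by
    intro k
    exact (hf.comp (continuous_const_smul _)).div (hf.comp (continuous_const_smul _))
      (fun x => hne _)
  have hfrac : ∀ k : ℕ, k < n → ∀ x ∈ Metric.ball (0:X) (R+1),
      ‖q k x - 1‖ < 1 := by
    intro k hk x hx
    have h0 : ((k:ℝ)/n) • x ∈ Metric.closedBall (0:X) (R+1) := by
      apply hpt x hx _ (by positivity)
      rw [div_le_one hnpos]; exact_mod_cast hk.le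
    have h1 : (((k:ℝ)+1)/n) • x ∈ Metric.closedBall (0:X) (R+1) := by
      apply hpt x hx _ (by positivity)
      rw [div_le_one hnpos]; exact_mod_cast hk
    have hdist : dist ((((k:ℝ)+1)/n) • x) (((k:ℝ)/n) • x) < δ := by
      rw [dist_eq_norm, ← sub_smul]
      have : ((k:ℝ)+1)/n - (k:ℝ)/n = 1/n := by field_simp; ring
      rw [this, norm_smul]
      rw [Metric.mem_ball, dist_zero_right] at hx
      calc |1/(n:ℝ)| * ‖x‖ = ‖x‖ / n := by
            rw [abs_of_pos (by positivity)]; ring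
      _ < (R+1)/n := by gcongr
      _ < δ := hnδ
    have := hδ' _ h1 _ h0 hdist
    rw [Complex.dist_eq] at this
    have hq1 : q k x - 1 = (f ((((k:ℝ)+1)/n) • x) - f (((k:ℝ)/n) • x)) / f (((k:ℝ)/n) • x) :=
      div_sub_one (hne _)
    rw [hq1, norm_div, habs, div_one]
    exact this
  -- the logarithm
  refine ⟨fun x => Complex.log (f 0) +
      ∑ k ∈ Finset.range n, Complex.log (q k x), ?_, ?_⟩
  · apply ContinuousOn.add continuousOn_const
    apply continuousOn_finset_sum
    intro k hk
    rw [Finset.mem_range] at hk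
    intro x hx
    have hslit : q k x ∈ Complex.slitPlane := by
      have h1 := hfrac k hk x hx
      left
      have hre : |(q k x - 1).re| ≤ ‖q k x - 1‖ := Complex.abs_re_le_norm _
      have h2 : (q k x).re = 1 + (q k x - 1).re := by
        simp [Complex.sub_re]
      rw [h2]
      have h3 : -(1:ℝ) < (q k x - 1).re := by
        exact (abs_lt.1 (hre.trans_lt h1)).1
      linarith
    exact (continuousAt_clog hslit).comp_continuousWithinAt
      (hq_cont k).continuousWithinAt
  · intro x hx
    have key : ∀ m : ℕ, m ≤ n →
        Complex.exp (Complex.log (f 0) + ∑ k ∈ Finset.range m, Complex.log (q k x))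
          = f (((m:ℝ)/n) • x) := by
      intro m
      induction m with
      | zero =>
        intro _
        simp only [Finset.range_zero, Finset.sum_empty, add_zero, Nat.cast_zero,
          zero_div, zero_smul]
        exact Complex.exp_log (hne 0)
      | succ m ih =>
        intro hm
        rw [Finset.sum_range_succ, ← add_assoc, Complex.exp_add,
          ih (Nat.le_of_succ_le hm), Complex.exp_log (by
            intro h0
            exact hne _ (by
              have := habs ((((m:ℝ)+1)/n) • x)
              rw [hq_def] at h0
              simp only at h0
              rcases div_eq_zero_iff.1 h0 with h | h
              · exact h
              · exact absurd h (hne _)))]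
        rw [hq_def]
        simp only
        rw [mul_comm, div_mul_cancel₀ _ (hne _)]
        norm_num
    have := key n le_rfl
    rwa [div_self (ne_of_gt hnpos), one_smul] at this

lemma aux_annulus (N : ℕ) (hN : 2 ≤ N) {r1 r2 : ℝ} (h1 : 0 < r1) (h12 : r1 ≤ r2) :
    IsPreconnected {x : EuclideanSpace ℝ (Fin N) | r1 ≤ ‖x‖ ∧ ‖x‖ ≤ r2} := by
  have hrank : 1 < Module.rank ℝ (EuclideanSpace ℝ (Fin N)) := by
    rw [← Module.finrank_eq_rank, finrank_euclideanSpace_fin]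
    exact_mod_cast (by omega : 1 < N)
  have hsph : IsConnected (sphere (0 : EuclideanSpace ℝ (Fin N)) 1) :=
    isConnected_sphere hrank 0 zero_le_one
  have hIcc : IsConnected (Icc r1 r2) := ⟨⟨r1, by simp [h12]⟩, isPreconnected_Icc⟩
  have hprod : IsConnected ((sphere (0 : EuclideanSpace ℝ (Fin N)) 1) ×ˢ (Icc r1 r2)) :=
    hsph.prod hIcc
  have hm : Continuous fun p : (EuclideanSpace ℝ (Fin N)) × ℝ => p.2 • p.1 :=
    continuous_snd.smul continuous_fst
  have himg : (fun p : (EuclideanSpace ℝ (Fin N)) × ℝ => p.2 • p.1) ''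
      ((sphere (0 : EuclideanSpace ℝ (Fin N)) 1) ×ˢ (Icc r1 r2))
      = {x : EuclideanSpace ℝ (Fin N) | r1 ≤ ‖x‖ ∧ ‖x‖ ≤ r2} := by
    ext x
    constructor
    · rintro ⟨⟨v, r⟩, ⟨hv, hr⟩, rfl⟩
      rw [mem_sphere_zero_iff_norm] at hv
      simp only [Set.mem_setOf_eq, norm_smul, hv, mul_one, Real.norm_eq_abs,
        _root_.abs_of_nonneg (le_trans h1.le hr.1)]
      exact ⟨hr.1, hr.2⟩
    · rintro ⟨hx1, hx2⟩
      have hx0 : ‖x‖ ≠ 0 := ne_of_gt (lt_of_lt_of_le h1 hx1)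
      refine ⟨(‖x‖⁻¹ • x, ‖x‖), ⟨?_, hx1, hx2⟩, ?_⟩
      · rw [mem_sphere_zero_iff_norm, norm_smul, Real.norm_eq_abs,
          _root_.abs_of_nonneg (inv_nonneg.2 (norm_nonneg x)), inv_mul_cancel₀ hx0]
      · simp only [smul_smul, mul_inv_cancel₀ hx0, one_smul]
  rw [← himg]
  exact (hprod.image _ hm.continuousOn).isPreconnected

theorem boundary_connected_of_connected_complement
    (N : ℕ) (hN : 2 ≤ N) (E : Set (EuclideanSpace ℝ (Fin N)))
    (hEb : Bornology.IsBounded E) (hE : IsConnected E) (hEc : IsConnected Eᶜ) :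
    IsConnected (frontier E) := by
  classical
  have hfne : (frontier E).Nonempty := by
    rw [nonempty_frontier_iff]
    refine ⟨hE.nonempty, fun h => ?_⟩
    obtain ⟨z, hz⟩ := hEc.nonempty
    rw [h] at hz; exact hz (mem_univ z)
  refine ⟨hfne, ?_⟩
  by_contra hnc
  rw [isPreconnected_closed_iff] at hnc
  push_neg at hnc
  obtain ⟨t, t', ht, ht', hcov, ⟨a, haf, hat⟩, ⟨b, hbf, hbt⟩, hdisj⟩ := hnc
  set A : Set (EuclideanSpace ℝ (Fin N)) := frontier E ∩ t with hA_def
  set B : Set (EuclideanSpace ℝ (Fin N)) := frontier E ∩ t' with hB_def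
  have hAclosed : IsClosed A := isClosed_frontier.inter ht
  have hBclosed : IsClosed B := isClosed_frontier.inter ht'
  have hABdisj : ∀ x, x ∈ A → x ∈ B → False := by
    intro x hxA hxB
    have : x ∈ frontier E ∩ (t ∩ t') := ⟨hxA.1, hxA.2, hxB.2⟩
    rw [hdisj] at this; exact this
  have hABcov : frontier E ⊆ A ∪ B := by
    intro x hx
    rcases hcov hx with hxt | hxt'
    · exact Or.inl ⟨hx, hxt⟩
    · exact Or.inr ⟨hx, hxt'⟩
  -- radii
  obtain ⟨R0, hR0⟩ := hEb.subset_closedBall (0 : (EuclideanSpace ℝ (Fin N)))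
  set R1 : ℝ := |R0| + 1 with hR1_def
  have hR1pos : (0:ℝ) < R1 := by positivity
  have hCball : closure E ⊆ Metric.ball (0 : (EuclideanSpace ℝ (Fin N))) R1 := by
    have h1 : closure E ⊆ Metric.closedBall (0 : (EuclideanSpace ℝ (Fin N))) R0 :=
      closure_minimal hR0 Metric.isClosed_closedBall
    intro x hx
    have := h1 hx
    rw [Metric.mem_closedBall] at this
    rw [Metric.mem_ball]
    calc dist x 0 ≤ R0 := this
    _ ≤ |R0| := le_abs_self R0
    _ < R1 := by rw [hR1_def]; linarith
  -- Urysohn function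
  set A' : Set (EuclideanSpace ℝ (Fin N)) := A ∪ (Metric.ball (0 : (EuclideanSpace ℝ (Fin N))) R1)ᶜ with hA'_def
  have hA'closed : IsClosed A' := hAclosed.union (Metric.isOpen_ball.isClosed_compl)
  have hA'B : Disjoint A' B := by
    rw [Set.disjoint_left]
    rintro x (hxA | hxO) hxB
    · exact hABdisj x hxA hxB
    · exact hxO (hCball (frontier_subset_closure hxB.1))
  obtain ⟨u, hu0, hu1, hu01⟩ := exists_continuous_zero_one_of_isClosed hA'closed hBclosed hA'B
  -- the circle-valued map
  set w : (EuclideanSpace ℝ (Fin N)) → ℂ := fun x => (u x : ℂ) * ((Real.pi : ℂ) * Complex.I) with hw_def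
  have hwcont : Continuous w :=
    (Complex.continuous_ofReal.comp u.continuous).mul continuous_const
  set f : (EuclideanSpace ℝ (Fin N)) → ℂ := fun x =>
    if x ∈ closure E then Complex.exp (w x) else Complex.exp (-(w x)) with hf_def
  have hagree : ∀ x ∈ frontier E, Complex.exp (w x) = Complex.exp (-(w x)) := by
    intro x hx
    rcases hABcov hx with hxA | hxB
    · have : u x = 0 := hu0 (Or.inl hxA)
      simp [hw_def, this]
    · have : u x = 1 := hu1 hxB
      simp only [hw_def, this, Complex.ofReal_one, one_mul]
      rw [Complex.exp_pi_mul_I, Complex.exp_neg, Complex.exp_pi_mul_I]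
      norm_num
  have hfcont : Continuous f := by
    apply continuous_if
    · intro x hx
      exact hagree x (frontier_closure_subset hx)
    · exact (Complex.continuous_exp.comp hwcont).continuousOn
    · exact (Complex.continuous_exp.comp hwcont.neg).continuousOn
  have habs : ∀ x, ‖f x‖ = 1 := by
    intro x
    have hre : ∀ y : (EuclideanSpace ℝ (Fin N)), (w y).re = 0 := by
      intro y
      simp [hw_def, Complex.mul_re, Complex.mul_im]
    rw [hf_def]
    simp only
    split
    · rw [Complex.norm_exp, hre, Real.exp_zero]
    · rw [Complex.norm_exp, Complex.neg_re, hre, neg_zero, Real.exp_zero]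
  have hfne0 : ∀ x, f x ≠ 0 := by
    intro x
    rw [hf_def]; simp only
    split <;> exact Complex.exp_ne_zero _
  have hf1 : ∀ x : (EuclideanSpace ℝ (Fin N)), R1 ≤ ‖x‖ → f x = 1 := by
    intro x hx
    have hxnc : x ∉ closure E := by
      intro h
      have := hCball h
      rw [Metric.mem_ball, dist_zero_right] at this
      linarith
    have hu : u x = 0 := hu0 (Or.inr (by
      simp only [Set.mem_compl_iff, Metric.mem_ball, dist_zero_right, not_lt]; exact hx))
    rw [hf_def]
    simp [hxnc, hw_def, hu]
  -- the global logarithm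
  set R2 : ℝ := R1 + 1 with hR2_def
  obtain ⟨g, hgcont, hgexp⟩ := aux_log hfcont habs R2 (by positivity)
  set S : Set (EuclideanSpace ℝ (Fin N)) := {x : (EuclideanSpace ℝ (Fin N)) | R1 ≤ ‖x‖ ∧ ‖x‖ ≤ R2} with hS_def
  have hSsub : S ⊆ Metric.ball (0 : (EuclideanSpace ℝ (Fin N))) (R2 + 1) := by
    intro x hx
    rw [Metric.mem_ball, dist_zero_right]
    exact lt_of_le_of_lt hx.2 (by linarith)
  have hSpre : IsPreconnected S := aux_annulus N hN hR1pos (by rw [hR2_def]; linarith)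
  have hSval : ∀ x ∈ S, Complex.exp (g x) = 1 := by
    intro x hx
    rw [hgexp x (hSsub hx), hf1 x hx.1]
  -- basepoint in S
  have hNpos : 0 < N := by omega
  set x₀ : (EuclideanSpace ℝ (Fin N)) := R1 • (EuclideanSpace.single (⟨0, hNpos⟩ : Fin N) (1:ℝ)) with hx₀_def
  have hx₀norm : ‖x₀‖ = R1 := by
    rw [hx₀_def, norm_smul, EuclideanSpace.norm_single]
    simp [abs_of_pos hR1pos]
  have hx₀S : x₀ ∈ S := ⟨le_of_eq hx₀norm.symm, by rw [hx₀norm, hR2_def]; linarith⟩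
  set c : ℂ := g x₀ with hc_def
  have hgc : ∀ x ∈ S, g x = c :=
    fun x hx => aux_const Metric.isOpen_ball hgcont hSsub hSpre hSval x hx x₀ hx₀S
  have hexpc : Complex.exp c = 1 := by rw [hc_def]; exact hSval x₀ hx₀S
  -- extend g to all of (EuclideanSpace ℝ (Fin N))
  set G : (EuclideanSpace ℝ (Fin N)) → ℂ := fun x => if ‖x‖ ≤ R2 then g x else c with hG_def
  have hGcont : Continuous G := by
    apply continuous_if
    · intro x hx
      have hset : {y : (EuclideanSpace ℝ (Fin N)) | ‖y‖ ≤ R2} = Metric.closedBall (0:(EuclideanSpace ℝ (Fin N))) R2 := by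
        ext y; rw [Metric.mem_closedBall, dist_zero_right]; rfl
      rw [hset] at hx
      have hxs := Metric.frontier_closedBall_subset_sphere hx
      rw [mem_sphere_zero_iff_norm] at hxs
      exact hgc x ⟨by rw [hxs, hR2_def]; linarith, le_of_eq hxs⟩
    · apply hgcont.mono
      intro x hx
      have hset : {y : (EuclideanSpace ℝ (Fin N)) | ‖y‖ ≤ R2} = Metric.closedBall (0:(EuclideanSpace ℝ (Fin N))) R2 := by
        ext y; rw [Metric.mem_closedBall, dist_zero_right]; rfl
      rw [hset, closure_eq_iff_isClosed.2 Metric.isClosed_closedBall] at hx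
      rw [Metric.mem_closedBall] at hx
      rw [Metric.mem_ball]
      linarith
    · exact continuousOn_const
  have hGexp : ∀ x, Complex.exp (G x) = f x := by
    intro x
    rw [hG_def]
    simp only
    split
    · next h =>
      apply hgexp
      rw [Metric.mem_ball, dist_zero_right]; linarith
    · next h =>
      push_neg at h
      rw [hexpc, hf1 x (by rw [hR2_def] at h; linarith)]
  -- constancy on closure E and closure Eᶜ
  have hCpre : IsPreconnected (closure E) := hE.isPreconnected.closure
  have hDpre : IsPreconnected (closure Eᶜ) := hEc.isPreconnected.closure
  have hfrontC : frontier E ⊆ closure E := frontier_subset_closure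
  have hfrontD : frontier E ⊆ closure Eᶜ := by
    rw [frontier_eq_closure_inter_closure]; exact inter_subset_right
  have hfD : ∀ x ∈ closure Eᶜ, f x = Complex.exp (-(w x)) := by
    intro x hx
    by_cases hxC : x ∈ closure E
    · have hxf : x ∈ frontier E := by
        rw [frontier_eq_closure_inter_closure]; exact ⟨hxC, hx⟩
      rw [hf_def]; simp only [if_pos hxC]
      exact hagree x hxf
    · rw [hf_def]; simp only [if_neg hxC]
  have h1const : ∀ x ∈ closure E, ∀ y ∈ closure E, G x - w x = G y - w y := by
    apply aux_const isOpen_univ (hGcont.sub hwcont).continuousOn (subset_univ _) hCpre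
    intro x hx
    rw [Pi.sub_apply, Complex.exp_sub, hGexp]
    rw [hf_def]; simp only [if_pos hx]
    exact div_self (Complex.exp_ne_zero _)
  have h2const : ∀ x ∈ closure Eᶜ, ∀ y ∈ closure Eᶜ, G x + w x = G y + w y := by
    apply aux_const isOpen_univ (hGcont.add hwcont).continuousOn (subset_univ _) hDpre
    intro x hx
    rw [Pi.add_apply, Complex.exp_add, hGexp, hfD x hx, ← Complex.exp_add]
    simp
  -- contradiction
  have haA : a ∈ A := ⟨haf, hat⟩
  have hbB : b ∈ B := ⟨hbf, hbt⟩
  have hua : u a = 0 := hu0 (Or.inl haA)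
  have hub : u b = 1 := hu1 hbB
  have hwa : w a = 0 := by simp [hw_def, hua]
  have hwb : w b = (Real.pi : ℂ) * Complex.I := by simp [hw_def, hub]
  have e1 : G a - w a = G b - w b := h1const a (hfrontC haf) b (hfrontC hbf)
  have e2 : G a + w a = G b + w b := h2const a (hfrontD haf) b (hfrontD hbf)
  rw [hwa, hwb] at e1 e2
  have : (Real.pi : ℂ) * Complex.I = 0 := by linear_combination (e1 - e2) / 2
  rw [mul_eq_zero] at this
  rcases this with h | h
  · exact Real.pi_ne_zero (by exact_mod_cast h)
  · exact Complex.I_ne_zero h
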